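/- For every integer n ≥ 1 and all real numbers α and θ: Σ_p (∏_{j=1}^{|p|−1} (θ + j·α)) · ∏_{C∈p} ∏_{i=1}^{|C|−1} (i − α) = ∏_{i=1}^{n−1} (θ + i), where the sum is over all partitions p of {1,…,n}, |p| denotes the number of blocks of p, |C| the size of a block C, and empty products equal 1. -/

import Mathlib

open Finset

namespace PYEppf

variable {X : Type*} [DecidableEq X]

/-- The EPPF weight of a partition. -/
noncomputable def w (α θ : ℝ) {s : Finset X} (p : Finpartition s) : ℝ :=
  (∏ j ∈ Finset.range (p.parts.card - 1), (θ + (j + 1 : ℝ) * α)) *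
    ∏ C ∈ p.parts, ∏ i ∈ Finset.range (C.card - 1), ((i + 1 : ℝ) - α)

lemma not_mem_part {t : Finset X} {a : X} (ha : a ∉ t) (p : Finpartition t)
    {C : Finset X} (hC : C ∈ p.parts) : a ∉ C := fun h => ha (p.le hC h)

/-- Add `a` as a new singleton block. -/
def addBlock {t : Finset X} {a : X} (ha : a ∉ t) (p : Finpartition t) :
    Finpartition (insert a t) :=
  p.extend (b := {a}) (by simp)
    (by simpa using ha)
    (by rw [sup_eq_union, union_comm, ← insert_eq])

lemma addBlock_parts {t : Finset X} {a : X} (ha : a ∉ t) (p : Finpartition t) :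
    (addBlock ha p).parts = insert {a} p.parts := rfl

/-- Add `a` to an existing block `C`. -/
def intoBlock {t : Finset X} {a : X} (ha : a ∉ t) (p : Finpartition t)
    {C : Finset X} (hC : C ∈ p.parts) : Finpartition (insert a t) where
  parts := insert (insert a C) (p.parts.erase C)
  supIndep := by
    rw [Finset.supIndep_iff_pairwiseDisjoint]
    intro D hD E hE hDE
    simp only [coe_insert, Set.mem_insert_iff, mem_coe, Finset.mem_erase] at hD hE
    rcases hD with rfl | hD <;> rcases hE with rfl | hE
    · exact absurd rfl hDE
    · show Disjoint (insert a C) E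
      rw [Finset.disjoint_insert_left]
      exact ⟨not_mem_part ha p hE.2, p.disjoint hC hE.2 (Ne.symm hE.1)⟩
    · show Disjoint D (insert a C)
      rw [Finset.disjoint_insert_right]
      exact ⟨not_mem_part ha p hD.2, p.disjoint hD.2 hC hD.1⟩
    · exact p.disjoint hD.2 hE.2 hDE
  sup_parts := by
    have h1 : p.parts = insert C (p.parts.erase C) := (Finset.insert_erase hC).symm
    have h2 : C ∪ (p.parts.erase C).sup id = t := by
      have := p.sup_parts
      rw [h1, Finset.sup_insert] at this
      simpa [sup_eq_union] using this
    rw [Finset.sup_insert]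
    show insert a C ∪ _ = _
    rw [Finset.insert_union, h2]
  bot_notMem := by
    simp only [Finset.bot_eq_empty, mem_insert]
    push_neg
    exact ⟨(insert_nonempty a C).ne_empty.symm,
      fun h => p.bot_notMem (Finset.mem_of_mem_erase h)⟩

lemma intoBlock_parts {t : Finset X} {a : X} (ha : a ∉ t) (p : Finpartition t)
    {C : Finset X} (hC : C ∈ p.parts) :
    (intoBlock ha p hC).parts = insert (insert a C) (p.parts.erase C) := rfl

/-- The insertion map. -/
def insFun {t : Finset X} {a : X} (ha : a ∉ t) :
    (Σ p : Finpartition t, Option {C // C ∈ p.parts}) → Finpartition (insert a t) :=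
  fun x => x.2.elim (addBlock ha x.1) (fun C => intoBlock ha x.1 C.2)

lemma singleton_not_mem {t : Finset X} {a : X} (ha : a ∉ t) (p : Finpartition t) :
    ({a} : Finset X) ∉ p.parts := fun h => not_mem_part ha p h (mem_singleton_self a)

lemma insert_ne_singleton {t : Finset X} {a : X} (ha : a ∉ t) (p : Finpartition t)
    {C : Finset X} (hC : C ∈ p.parts) : insert a C ≠ ({a} : Finset X) := by
  intro h
  obtain ⟨x, hx⟩ := p.nonempty_of_mem_parts hC
  have hxa : x ∈ ({a} : Finset X) := h ▸ (Finset.mem_insert_of_mem hx)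
  rw [mem_singleton] at hxa
  exact not_mem_part ha p hC (hxa ▸ hx)

lemma insertA_not_mem_erase {t : Finset X} {a : X} (ha : a ∉ t) (p : Finpartition t)
    (C D : Finset X) : insert a C ∉ p.parts.erase D := fun h =>
  not_mem_part ha p (Finset.mem_of_mem_erase h) (mem_insert_self a C)

lemma insFun_injective {t : Finset X} {a : X} (ha : a ∉ t) :
    Function.Injective (insFun ha) := by
  have key : ∀ (q q' : Finpartition t) (o : Option {C // C ∈ q.parts})
      (o' : Option {C // C ∈ q'.parts}), insFun ha ⟨q, o⟩ = insFun ha ⟨q', o'⟩ →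
      q.parts = q'.parts := by
    intro q q' o o' hqq
    have hparts := congrArg Finpartition.parts hqq
    match o, o' with
    | none, none =>
      simp only [insFun, Option.elim, addBlock_parts] at hparts
      have := congrArg (fun s => Finset.erase s {a}) hparts
      simpa [Finset.erase_insert (singleton_not_mem ha q),
        Finset.erase_insert (singleton_not_mem ha q')] using this
    | none, some ⟨C, hC⟩ =>
      exfalso
      simp only [insFun, Option.elim, addBlock_parts, intoBlock_parts] at hparts
      have hmem : ({a} : Finset X) ∈ insert (insert a C) (q'.parts.erase C) := by
        rw [← hparts]; exact mem_insert_self _ _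
      rcases mem_insert.1 hmem with h' | h'
      · exact insert_ne_singleton ha q' hC h'.symm
      · exact singleton_not_mem ha q' (Finset.mem_of_mem_erase h')
    | some ⟨C, hC⟩, none =>
      exfalso
      simp only [insFun, Option.elim, addBlock_parts, intoBlock_parts] at hparts
      have hmem : ({a} : Finset X) ∈ insert (insert a C) (q.parts.erase C) := by
        rw [hparts]; exact mem_insert_self _ _
      rcases mem_insert.1 hmem with h' | h'
      · exact insert_ne_singleton ha q hC h'.symm
      · exact singleton_not_mem ha q (Finset.mem_of_mem_erase h')
    | some ⟨C, hC⟩, some ⟨C', hC'⟩ =>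
      simp only [insFun, Option.elim, intoBlock_parts] at hparts
      have hCC' : insert a C = insert a C' := by
        refine Finpartition.eq_of_mem_parts (intoBlock ha q hC)
          (mem_insert_self _ _) ?_ (mem_insert_self a C) (mem_insert_self a C')
        rw [intoBlock_parts, hparts]; exact mem_insert_self _ _
      have hCeq : C = C' := by
        have := congrArg (fun s => Finset.erase s a) hCC'
        simpa [Finset.erase_insert (not_mem_part ha q hC),
          Finset.erase_insert (not_mem_part ha q' hC')] using this
      subst hCeq
      have herase : q.parts.erase C = q'.parts.erase C := by
        have := congrArg (fun s => Finset.erase s (insert a C)) hparts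
        simpa [Finset.erase_insert (insertA_not_mem_erase ha q C C),
          Finset.erase_insert (insertA_not_mem_erase ha q' C C)] using this
      rw [← Finset.insert_erase hC, ← Finset.insert_erase hC', herase]
  rintro ⟨p, o⟩ ⟨p', o'⟩ h
  have hpp : p = p' := Finpartition.ext (key p p' o o' h)
  subst hpp
  have hparts := congrArg Finpartition.parts h
  suffices ho : o = o' by rw [ho]
  match o, o' with
  | none, none => rfl
  | none, some ⟨C, hC⟩ =>
    exfalso
    simp only [insFun, Option.elim, addBlock_parts, intoBlock_parts] at hparts
    have hmem : ({a} : Finset X) ∈ insert (insert a C) (p.parts.erase C) := by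
      rw [← hparts]; exact mem_insert_self _ _
    rcases mem_insert.1 hmem with h' | h'
    · exact insert_ne_singleton ha p hC h'.symm
    · exact singleton_not_mem ha p (Finset.mem_of_mem_erase h')
  | some ⟨C, hC⟩, none =>
    exfalso
    simp only [insFun, Option.elim, addBlock_parts, intoBlock_parts] at hparts
    have hmem : ({a} : Finset X) ∈ insert (insert a C) (p.parts.erase C) := by
      rw [hparts]; exact mem_insert_self _ _
    rcases mem_insert.1 hmem with h' | h'
    · exact insert_ne_singleton ha p hC h'.symm
    · exact singleton_not_mem ha p (Finset.mem_of_mem_erase h')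
  | some ⟨C, hC⟩, some ⟨C', hC'⟩ =>
    simp only [insFun, Option.elim, intoBlock_parts] at hparts
    have hCC' : insert a C = insert a C' := by
      refine Finpartition.eq_of_mem_parts (intoBlock ha p hC)
        (mem_insert_self _ _) ?_ (mem_insert_self a C) (mem_insert_self a C')
      rw [intoBlock_parts, hparts]; exact mem_insert_self _ _
    have hCeq : C = C' := by
      have := congrArg (fun s => Finset.erase s a) hCC'
      simpa [Finset.erase_insert (not_mem_part ha p hC),
        Finset.erase_insert (not_mem_part ha p hC')] using this
    subst hCeq
    rfl

lemma a_not_mem_of_erase_part {t : Finset X} {a : X} (ha : a ∉ t)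
    (q : Finpartition (insert a t)) {D : Finset X}
    (hD : D ∈ q.parts.erase (q.part a)) : a ∉ D := fun hab =>
  (Finset.mem_erase.1 hD).1
    (q.eq_of_mem_parts (Finset.mem_of_mem_erase hD) (q.part_mem.2 (mem_insert_self a t)) hab
      (q.mem_part (mem_insert_self a t)))

lemma restrict_sup {t : Finset X} {a : X} (ha : a ∉ t) (q : Finpartition (insert a t)) :
    (q.part a).erase a ∪ (q.parts.erase (q.part a)).sup id = t := by
  set B := q.part a with hBdef
  have hB : B ∈ q.parts := q.part_mem.2 (mem_insert_self a t)
  have h2 : B ∪ (q.parts.erase B).sup id = insert a t := by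
    have h1 : q.parts = insert B (q.parts.erase B) := (Finset.insert_erase hB).symm
    have := q.sup_parts
    rw [h1, Finset.sup_insert] at this
    simpa [sup_eq_union] using this
  have haR : a ∉ (q.parts.erase B).sup id := by
    intro hmem
    obtain ⟨D, hD, haD⟩ := Finset.mem_sup.1 hmem
    exact a_not_mem_of_erase_part ha q hD haD
  have := congrArg (fun s => Finset.erase s a) h2
  simpa [Finset.erase_union_distrib, Finset.erase_eq_of_notMem haR,
    Finset.erase_insert ha] using this

lemma insFun_surjective {t : Finset X} {a : X} (ha : a ∉ t) :
    Function.Surjective (insFun ha) := by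
  intro q
  have haIn : a ∈ insert a t := mem_insert_self a t
  set B := q.part a with hBdef
  have hB : B ∈ q.parts := q.part_mem.2 haIn
  have haB : a ∈ B := q.mem_part haIn
  have hsup := restrict_sup ha q
  rw [← hBdef] at hsup
  by_cases hsing : B = {a}
  · -- new-block case
    have hsup' : (q.parts.erase B).sup id = t := by
      rw [hsing] at hsup ⊢
      simpa using hsup
    refine ⟨⟨q.ofSubset (Finset.erase_subset B q.parts) hsup', none⟩, ?_⟩
    apply Finpartition.ext
    show insert {a} (q.parts.erase B) = q.parts
    rw [← hsing, Finset.insert_erase hB]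
  · -- into-block case
    set C := B.erase a with hCdef
    have hCne : C.Nonempty := by
      rw [Finset.nonempty_iff_ne_empty]
      intro h
      rw [hCdef, Finset.erase_eq_empty_iff] at h
      rcases h with h | h
      · rw [h] at haB; exact absurd haB (Finset.notMem_empty a)
      · exact hsing h
    have hCq : C ∉ q.parts := by
      intro hCmem
      rcases eq_or_ne C B with hEq | hNe
      · have haC : a ∈ C := hEq.symm ▸ haB
        rw [hCdef] at haC
        exact (Finset.notMem_erase a B) haC
      · have hd : Disjoint C B := q.disjoint hCmem hB hNe
        obtain ⟨x, hx⟩ := hCne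
        exact Finset.disjoint_left.1 hd hx (Finset.mem_of_mem_erase (hCdef ▸ hx))
    have hInd : (insert C (q.parts.erase B)).SupIndep id := by
      rw [Finset.supIndep_iff_pairwiseDisjoint]
      intro D hD E hE hDE
      simp only [coe_insert, Set.mem_insert_iff, mem_coe] at hD hE
      simp only [Function.onFun, id_eq]
      rcases hD with rfl | hD <;> rcases hE with rfl | hE
      · exact absurd rfl hDE
      · exact (q.disjoint hB (Finset.mem_of_mem_erase hE)
          (Ne.symm (Finset.mem_erase.1 hE).1)).mono_left (Finset.erase_subset a B)
      · exact (q.disjoint (Finset.mem_of_mem_erase hD) hB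
          (Finset.mem_erase.1 hD).1).mono_right (Finset.erase_subset a B)
      · exact q.disjoint (Finset.mem_of_mem_erase hD) (Finset.mem_of_mem_erase hE) hDE
    have hSup : (insert C (q.parts.erase B)).sup id = t := by
      rw [Finset.sup_insert]
      show C ∪ _ = _
      exact hsup
    have hBot : ⊥ ∉ insert C (q.parts.erase B) := by
      simp only [Finset.bot_eq_empty, mem_insert]
      push_neg
      exact ⟨Ne.symm hCne.ne_empty, fun h => q.bot_notMem (Finset.mem_of_mem_erase h)⟩
    let p : Finpartition t := ⟨insert C (q.parts.erase B), hInd, hSup, hBot⟩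
    have hCp : C ∈ p.parts := mem_insert_self _ _
    refine ⟨⟨p, some ⟨C, hCp⟩⟩, ?_⟩
    apply Finpartition.ext
    show insert (insert a C) (p.parts.erase C) = q.parts
    have hpparts : p.parts = insert C (q.parts.erase B) := rfl
    have hCnotErase : C ∉ q.parts.erase B := fun h => hCq (Finset.mem_of_mem_erase h)
    rw [hpparts, Finset.erase_insert hCnotErase, hCdef, Finset.insert_erase haB,
      Finset.insert_erase hB]

lemma w_addBlock (α θ : ℝ) {t : Finset X} {a : X} (ha : a ∉ t) (p : Finpartition t) :
    w α θ (addBlock ha p) =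
      (∏ j ∈ Finset.range p.parts.card, (θ + (j + 1 : ℝ) * α)) *
        ∏ C ∈ p.parts, ∏ i ∈ Finset.range (C.card - 1), ((i + 1 : ℝ) - α) := by
  have hnm := singleton_not_mem ha p
  rw [w, addBlock_parts, Finset.card_insert_of_notMem hnm, Nat.add_sub_cancel,
    Finset.prod_insert hnm]
  simp

lemma w_intoBlock (α θ : ℝ) {t : Finset X} {a : X} (ha : a ∉ t) (p : Finpartition t)
    {C : Finset X} (hC : C ∈ p.parts) :
    w α θ (intoBlock ha p hC) = ((C.card : ℝ) - α) * w α θ p := by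
  have hCne : 1 ≤ C.card := Finset.card_pos.2 (p.nonempty_of_mem_parts hC)
  have hnm : insert a C ∉ p.parts.erase C := insertA_not_mem_erase ha p C C
  have haC : a ∉ C := not_mem_part ha p hC
  have hcard : (intoBlock ha p hC).parts.card = p.parts.card := by
    rw [intoBlock_parts, Finset.card_insert_of_notMem hnm, Finset.card_erase_of_mem hC,
      Nat.sub_add_cancel (Finset.card_pos.2 ⟨C, hC⟩)]
  have hsplit : p.parts = insert C (p.parts.erase C) := (Finset.insert_erase hC).symm
  rw [w, w, hcard, intoBlock_parts, Finset.prod_insert hnm]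
  nth_rewrite 4 [hsplit]
  rw [Finset.prod_insert (Finset.notMem_erase C p.parts)]
  have hc1 : (insert a C).card - 1 = (C.card - 1) + 1 := by
    rw [Finset.card_insert_of_notMem haC]
    omega
  rw [hc1, Finset.prod_range_succ]
  have : ((C.card - 1 : ℕ) : ℝ) + 1 - α = (C.card : ℝ) - α := by
    have : ((C.card - 1 : ℕ) : ℝ) = (C.card : ℝ) - 1 := by
      push_cast [hCne]; ring
    rw [this]; ring
  rw [this]
  ring

theorem sum_w (α θ : ℝ) (s : Finset X) :
    ∑ p : Finpartition s, w α θ p = ∏ i ∈ Finset.range (s.card - 1), (θ + (i + 1 : ℝ)) := by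
  rcases s.eq_empty_or_nonempty with rfl | hs
  · haveI : Unique (Finpartition (∅ : Finset X)) :=
      inferInstanceAs (Unique (Finpartition (⊥ : Finset X)))
    rw [Fintype.sum_unique]
    have hd : (default : Finpartition (∅ : Finset X)).parts = ∅ := by
      rw [Finpartition.parts_eq_empty_iff]; rfl
    simp [w, hd]
  · induction hs using Finset.Nonempty.cons_induction with
    | singleton a =>
      have huniq : ∀ q : Finpartition ({a} : Finset X), q.parts = {{a}} := by
        intro q
        apply Finset.Subset.antisymm
        · intro B hB
          rw [mem_singleton]
          rcases (Finset.subset_singleton_iff.1 (q.le hB)) with h | h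
          · exact absurd h (by simpa using q.ne_bot hB)
          · exact h
        · obtain ⟨B, hB⟩ := q.parts_nonempty (by simp)
          intro x hx
          rw [mem_singleton] at hx
          subst hx
          rcases (Finset.subset_singleton_iff.1 (q.le hB)) with h | h
          · exact absurd h (by simpa using q.ne_bot hB)
          · exact h ▸ hB
      haveI : Subsingleton (Finpartition ({a} : Finset X)) :=
        ⟨fun q q' => Finpartition.ext (by rw [huniq q, huniq q'])⟩
      have hw : ∀ q : Finpartition ({a} : Finset X), w α θ q = 1 := by
        intro q
        simp [w, huniq q]
      rw [Finset.sum_eq_single_of_mem ⊥ (mem_univ _)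
        (fun b _ hb => absurd (Subsingleton.elim b ⊥) hb), hw ⊥]
      simp
    | cons a t hat hts IH =>
      rw [Finset.cons_eq_insert]
      rw [← Fintype.sum_bijective (insFun hat) ⟨insFun_injective hat, insFun_surjective hat⟩
        (fun x => w α θ (insFun hat x)) (w α θ) (fun x => rfl)]
      rw [← Finset.univ_sigma_univ, Finset.sum_sigma]
      have hterm : ∀ p : Finpartition t,
          (∑ o : Option {C // C ∈ p.parts}, w α θ (insFun hat ⟨p, o⟩))
            = (θ + t.card) * w α θ p := by
        intro p
        rw [Fintype.sum_option]
        have h1 : w α θ (insFun hat ⟨p, none⟩) = w α θ (addBlock hat p) := rfl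
        have h2 : ∀ c : {C // C ∈ p.parts},
            w α θ (insFun hat ⟨p, some c⟩) = ((c.1.card : ℝ) - α) * w α θ p := by
          intro c
          exact w_intoBlock α θ hat p c.2
        rw [h1, w_addBlock α θ hat p]
        simp_rw [h2]
        rw [Finset.sum_coe_sort p.parts (fun C => ((C.card : ℝ) - α) * w α θ p)]
        have hk : 1 ≤ p.parts.card := Finset.card_pos.2 (p.parts_nonempty
          (by simpa [Finset.bot_eq_empty] using hts.ne_empty))
        have hks : p.parts.card = (p.parts.card - 1) + 1 := by omega
        have hcast : ((p.parts.card - 1 : ℕ) : ℝ) + 1 = (p.parts.card : ℝ) := by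
          push_cast [hk]; ring
        have hpref : (∏ j ∈ Finset.range p.parts.card, (θ + (j + 1 : ℝ) * α))
            = (∏ j ∈ Finset.range (p.parts.card - 1), (θ + (j + 1 : ℝ) * α))
              * (θ + (p.parts.card : ℝ) * α) := by
          conv_lhs => rw [hks]
          rw [Finset.prod_range_succ, hcast]
        rw [hpref]
        have hsum : ∑ C ∈ p.parts, ((C.card : ℝ) - α) * w α θ p
            = ((t.card : ℝ) - p.parts.card * α) * w α θ p := by
          rw [← Finset.sum_mul, Finset.sum_sub_distrib, Finset.sum_const,
            ← Nat.cast_sum _ _, p.sum_card_parts]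
          push_cast
          ring
        rw [hsum, w]
        ring
      rw [Finset.sum_congr rfl (fun p _ => hterm p), ← Finset.mul_sum, IH]
      have hc : (insert a t).card = t.card + 1 := Finset.card_insert_of_notMem hat
      have hk : 1 ≤ t.card := Finset.card_pos.2 hts
      rw [hc, Nat.add_sub_cancel]
      have hts' : t.card = (t.card - 1) + 1 := by omega
      have hcast : ((t.card - 1 : ℕ) : ℝ) + 1 = (t.card : ℝ) := by
        push_cast [hk]; ring
      have key : (∏ i ∈ Finset.range t.card, (θ + (i + 1 : ℝ)))
          = (∏ i ∈ Finset.range (t.card - 1), (θ + (i + 1 : ℝ))) * (θ + (t.card : ℝ)) := by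
        conv_lhs => rw [hts']
        rw [Finset.prod_range_succ, hcast]
      rw [key]
      ring

end PYEppf

/-- The two-parameter Poisson–Dirichlet EPPF normalization: for every `n ≥ 1` and all reals
`α, θ`, `Σ_p (∏_{j=1}^{|p|-1} (θ+jα)) ∏_{C∈p} ∏_{i=1}^{|C|-1} (i-α) = ∏_{i=1}^{n-1} (θ+i)`,
summing over all partitions `p` of `{1,…,n}`; empty products equal `1`. -/
theorem pitman_yor_eppf_sum (n : ℕ) (hn : 1 ≤ n) (α θ : ℝ) :
    ∑ p : Finpartition (Finset.univ : Finset (Fin n)),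
        (∏ j ∈ Finset.range (p.parts.card - 1), (θ + (j + 1 : ℝ) * α)) *
          ∏ C ∈ p.parts, ∏ i ∈ Finset.range (C.card - 1), ((i + 1 : ℝ) - α)
      = ∏ i ∈ Finset.range (n - 1), (θ + (i + 1 : ℝ)) := by
  have := PYEppf.sum_w α θ (Finset.univ : Finset (Fin n))
  simpa [PYEppf.w, Finset.card_univ] using this
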